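/- The set Hameo(M,ω) of Hamiltonian homeomorphisms — i.e., homeomorphisms h of M such that h = C⁰-lim φ_{H_i}¹ for some sequence of smooth Hamiltonians H_i which is Cauchy in the L^{(1,∞)} Hofer norm and whose flows φ_{H_i} are Cauchy in the C⁰-metric on paths — forms a subgroup of Homeo(M). -/

import Mathlib

set_option linter.unusedSectionVars false
set_option linter.unusedVariables false

open Filter Topology MeasureTheory

noncomputable def cdist {M : Type*} [MetricSpace M] (φ ψ : Homeomorph M M) : ℝ :=
  ⨆ x, dist (φ x) (ψ x)

noncomputable def hdist {M : Type*} [MetricSpace M] (φ ψ : Homeomorph M M) : ℝ :=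
  max (cdist φ ψ) (cdist φ.symm ψ.symm)

noncomputable def pdist {M : Type*} [MetricSpace M] (lam mu : ℝ → Homeomorph M M) : ℝ :=
  ⨆ t : Set.Icc (0:ℝ) 1, hdist (lam t) (mu t)

noncomputable def hnorm {M : Type*} (F : ℝ → M → ℝ) : ℝ :=
  ∫ t in (0:ℝ)..1, ((⨆ x, F t x) - ⨅ x, F t x)

noncomputable def dham {M : Type*} [MetricSpace M]
    (p q : (ℝ → Homeomorph M M) × (ℝ → M → ℝ)) : ℝ :=
  hnorm (fun t x => p.2 t x - q.2 t x) + pdist p.1 q.1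

noncomputable def pcomp {M : Type*} [MetricSpace M]
    (p q : (ℝ → Homeomorph M M) × (ℝ → M → ℝ)) :
    (ℝ → Homeomorph M M) × (ℝ → M → ℝ) :=
  (fun t => (q.1 t).trans (p.1 t), fun t x => p.2 t x + q.2 t ((p.1 t).symm x))

noncomputable def pinv {M : Type*} [MetricSpace M]
    (p : (ℝ → Homeomorph M M) × (ℝ → M → ℝ)) :
    (ℝ → Homeomorph M M) × (ℝ → M → ℝ) :=
  (fun t => (p.1 t).symm, fun t x => -(p.2 t (p.1 t x)))

section Helpers

variable {M : Type*} [MetricSpace M] [CompactSpace M] [Nonempty M]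

instance : Nonempty (Set.Icc (0:ℝ) 1) := ⟨⟨0, by norm_num⟩⟩

lemma exists_diam : ∃ C : ℝ, 0 ≤ C ∧ ∀ x y : M, dist x y ≤ C := by
  obtain ⟨C, hC⟩ := Metric.isBounded_iff.mp (isCompact_univ : IsCompact (Set.univ : Set M)).isBounded
  inhabit M
  exact ⟨C, le_trans dist_nonneg (hC (Set.mem_univ default) (Set.mem_univ default)),
    fun x y => hC (Set.mem_univ x) (Set.mem_univ y)⟩

lemma bddAbove_dist (f g : M → M) : BddAbove (Set.range fun x => dist (f x) (g x)) := by
  obtain ⟨C, _, hC⟩ := exists_diam (M := M)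
  exact ⟨C, by rintro r ⟨x, rfl⟩; exact hC _ _⟩

lemma dist_le_cdist (φ ψ : Homeomorph M M) (x : M) : dist (φ x) (ψ x) ≤ cdist φ ψ :=
  le_ciSup (bddAbove_dist _ _) x

lemma cdist_le {φ ψ : Homeomorph M M} {C : ℝ} (h : ∀ x, dist (φ x) (ψ x) ≤ C) :
    cdist φ ψ ≤ C := ciSup_le h

lemma cdist_nonneg (φ ψ : Homeomorph M M) : 0 ≤ cdist φ ψ := by
  inhabit M
  exact le_trans dist_nonneg (dist_le_cdist φ ψ default)

lemma cdist_le_diam {φ ψ : Homeomorph M M} {C : ℝ} (hC : ∀ x y : M, dist x y ≤ C) :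
    cdist φ ψ ≤ C := cdist_le fun x => hC _ _

lemma hdist_nonneg (φ ψ : Homeomorph M M) : 0 ≤ hdist φ ψ :=
  le_trans (cdist_nonneg φ ψ) (le_max_left _ _)

lemma cdist_le_hdist (φ ψ : Homeomorph M M) : cdist φ ψ ≤ hdist φ ψ := le_max_left _ _

lemma cdist_symm_le_hdist (φ ψ : Homeomorph M M) : cdist φ.symm ψ.symm ≤ hdist φ ψ :=
  le_max_right _ _

lemma hdist_le {φ ψ : Homeomorph M M} {C : ℝ} (h1 : cdist φ ψ ≤ C)
    (h2 : cdist φ.symm ψ.symm ≤ C) : hdist φ ψ ≤ C := max_le h1 h2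

lemma hdist_symm (φ ψ : Homeomorph M M) : hdist φ.symm ψ.symm = hdist φ ψ := by
  simp only [hdist, Homeomorph.symm_symm]
  exact max_comm _ _

lemma hdist_le_pdist (lam mu : ℝ → Homeomorph M M) {t : ℝ} (ht : t ∈ Set.Icc (0:ℝ) 1) :
    hdist (lam t) (mu t) ≤ pdist lam mu := by
  obtain ⟨C, hC0, hC⟩ := exists_diam (M := M)
  have hb : BddAbove (Set.range fun s : Set.Icc (0:ℝ) 1 => hdist (lam s) (mu s)) := by
    refine ⟨C, ?_⟩
    rintro r ⟨s, rfl⟩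
    exact hdist_le (cdist_le_diam hC) (cdist_le_diam hC)
  exact le_ciSup hb ⟨t, ht⟩

lemma pdist_le {lam mu : ℝ → Homeomorph M M} {C : ℝ}
    (h : ∀ t ∈ Set.Icc (0:ℝ) 1, hdist (lam t) (mu t) ≤ C) : pdist lam mu ≤ C :=
  ciSup_le fun t => h t t.2

lemma pdist_nonneg (lam mu : ℝ → Homeomorph M M) : 0 ≤ pdist lam mu :=
  le_trans (hdist_nonneg _ _) (hdist_le_pdist lam mu ⟨le_refl 0, by norm_num⟩)

/-- oscillation -/
noncomputable def osc (f : M → ℝ) : ℝ := (⨆ x, f x) - ⨅ x, f x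

lemma hnorm_eq (F : ℝ → M → ℝ) : hnorm F = ∫ t in (0:ℝ)..1, osc (F t) := rfl

lemma bddAbove_range_cont {f : M → ℝ} (hf : Continuous f) : BddAbove (Set.range f) :=
  (isCompact_range hf).bddAbove

lemma bddBelow_range_cont {f : M → ℝ} (hf : Continuous f) : BddBelow (Set.range f) :=
  (isCompact_range hf).bddBelow

lemma osc_nonneg {f : M → ℝ} (hf : Continuous f) : 0 ≤ osc f := by
  inhabit M
  have h1 := le_ciSup (bddAbove_range_cont hf) (default : M)
  have h2 := ciInf_le (bddBelow_range_cont hf) (default : M)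
  simp only [osc]; linarith

lemma osc_add_le {f g : M → ℝ} (hf : Continuous f) (hg : Continuous g) :
    osc (fun x => f x + g x) ≤ osc f + osc g := by
  have h1 : (⨆ x, f x + g x) ≤ (⨆ x, f x) + ⨆ x, g x :=
    ciSup_le fun x => add_le_add (le_ciSup (bddAbove_range_cont hf) x)
      (le_ciSup (bddAbove_range_cont hg) x)
  have h2 : (⨅ x, f x) + (⨅ x, g x) ≤ ⨅ x, f x + g x :=
    le_ciInf fun x => add_le_add (ciInf_le (bddBelow_range_cont hf) x)
      (ciInf_le (bddBelow_range_cont hg) x)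
  simp only [osc]; linarith

lemma osc_comp (f : M → ℝ) (e : Homeomorph M M) : osc (fun x => f (e x)) = osc f := by
  have hr : Set.range (f ∘ e) = Set.range f := e.surjective.range_comp f
  simp only [osc, iSup, iInf]
  rw [show Set.range (fun x => f (e x)) = Set.range f from hr]

lemma osc_le_of_abs_le {f : M → ℝ} {C : ℝ} (h : ∀ x, |f x| ≤ C) : osc f ≤ 2 * C := by
  have h1 : (⨆ x, f x) ≤ C := ciSup_le fun x => (abs_le.mp (h x)).2
  have h2 : (-C : ℝ) ≤ ⨅ x, f x := le_ciInf fun x => (abs_le.mp (h x)).1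
  simp only [osc]; linarith

lemma abs_ciSup_sub_ciSup_le {f g : M → ℝ} (hf : Continuous f) (hg : Continuous g) {ε : ℝ}
    (h : ∀ x, |f x - g x| ≤ ε) : |(⨆ x, f x) - ⨆ x, g x| ≤ ε := by
  rw [abs_le]
  constructor
  · have : (⨆ x, g x) ≤ (⨆ x, f x) + ε := ciSup_le fun x => by
      have := (abs_le.mp (h x)).1
      have := le_ciSup (bddAbove_range_cont hf) x
      linarith
    linarith
  · have : (⨆ x, f x) ≤ (⨆ x, g x) + ε := ciSup_le fun x => by
      have := (abs_le.mp (h x)).2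
      have := le_ciSup (bddAbove_range_cont hg) x
      linarith
    linarith

lemma abs_ciInf_sub_ciInf_le {f g : M → ℝ} (hf : Continuous f) (hg : Continuous g) {ε : ℝ}
    (h : ∀ x, |f x - g x| ≤ ε) : |(⨅ x, f x) - ⨅ x, g x| ≤ ε := by
  rw [abs_le]
  constructor
  · have : (⨅ x, g x) - ε ≤ ⨅ x, f x := le_ciInf fun x => by
      have := (abs_le.mp (h x)).1
      have := ciInf_le (bddBelow_range_cont hg) x
      linarith
    linarith
  · have : (⨅ x, f x) - ε ≤ ⨅ x, g x := le_ciInf fun x => by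
      have := (abs_le.mp (h x)).2
      have := ciInf_le (bddBelow_range_cont hf) x
      linarith
    linarith

/-- uniform continuity of a jointly continuous family over `t ∈ [0,1]`. -/
lemma unif_aux {N : Type*} [MetricSpace N] {f : ℝ → M → N}
    (hf : Continuous fun q : ℝ × M => f q.1 q.2) {ε : ℝ} (hε : 0 < ε) :
    ∃ δ > 0, ∀ t ∈ Set.Icc (0:ℝ) 1, ∀ x y : M, dist x y < δ → dist (f t x) (f t y) < ε := by
  have hK : IsCompact ((Set.Icc (0:ℝ) 1) ×ˢ (Set.univ : Set M)) :=
    isCompact_Icc.prod isCompact_univ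
  have huc := hK.uniformContinuousOn_of_continuous
    ((hf.continuousOn) : ContinuousOn _ _)
  obtain ⟨δ, hδ, hd⟩ := Metric.uniformContinuousOn_iff.mp huc ε hε
  refine ⟨δ, hδ, fun t ht x y hxy => ?_⟩
  have := hd (x := (t, x)) (by simp [ht]) (y := (t, y)) (by simp [ht]) ?_
  · exact this
  · simp only [Prod.dist_eq, dist_self]
    simpa [max_lt_iff, hδ] using hxy

/-- continuity in the parameter of the sup over a compact space. -/
lemma continuous_param_sup {F : ℝ → M → ℝ}
    (hF : Continuous fun q : ℝ × M => F q.1 q.2) :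
    Continuous fun t => ⨆ x, F t x := by
  rw [Metric.continuous_iff]
  intro t₀ ε hε
  have hK : IsCompact ((Set.Icc (t₀ - 1) (t₀ + 1)) ×ˢ (Set.univ : Set M)) :=
    isCompact_Icc.prod isCompact_univ
  have huc := hK.uniformContinuousOn_of_continuous (hF.continuousOn)
  obtain ⟨δ, hδ, hd⟩ := Metric.uniformContinuousOn_iff.mp huc (ε / 2) (by linarith)
  refine ⟨min δ 1, by simp [hδ], fun t ht => ?_⟩
  have habs : ∀ x : M, |F t x - F t₀ x| ≤ ε / 2 := by
    intro x
    have h1 : (t, x) ∈ (Set.Icc (t₀ - 1) (t₀ + 1)) ×ˢ (Set.univ : Set M) := by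
      have : |t - t₀| < 1 := lt_of_lt_of_le (lt_of_lt_of_le ht (min_le_right _ _)) le_rfl
      simp only [Set.mem_prod, Set.mem_Icc, Set.mem_univ, and_true]
      rw [abs_lt] at this
      constructor <;> linarith
    have h2 : (t₀, x) ∈ (Set.Icc (t₀ - 1) (t₀ + 1)) ×ˢ (Set.univ : Set M) := by
      simp only [Set.mem_prod, Set.mem_Icc, Set.mem_univ, and_true]
      constructor <;> linarith
    have hdd : dist ((t, x) : ℝ × M) (t₀, x) < δ := by
      simp only [Prod.dist_eq, dist_self]
      have : dist t t₀ < δ := lt_of_lt_of_le ht (min_le_left _ _)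
      simpa [max_lt_iff, hδ] using this
    have := hd _ h1 _ h2 hdd
    rw [Real.dist_eq] at this
    exact le_of_lt this
  have hct : Continuous (F t) := hF.comp (Continuous.prodMk_right t)
  have hct₀ : Continuous (F t₀) := hF.comp (Continuous.prodMk_right t₀)
  rw [Real.dist_eq]
  exact lt_of_le_of_lt (abs_ciSup_sub_ciSup_le hct hct₀ habs) (by linarith)

lemma continuous_param_inf {F : ℝ → M → ℝ}
    (hF : Continuous fun q : ℝ × M => F q.1 q.2) :
    Continuous fun t => ⨅ x, F t x := by
  rw [Metric.continuous_iff]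
  intro t₀ ε hε
  have hK : IsCompact ((Set.Icc (t₀ - 1) (t₀ + 1)) ×ˢ (Set.univ : Set M)) :=
    isCompact_Icc.prod isCompact_univ
  have huc := hK.uniformContinuousOn_of_continuous (hF.continuousOn)
  obtain ⟨δ, hδ, hd⟩ := Metric.uniformContinuousOn_iff.mp huc (ε / 2) (by linarith)
  refine ⟨min δ 1, by simp [hδ], fun t ht => ?_⟩
  have habs : ∀ x : M, |F t x - F t₀ x| ≤ ε / 2 := by
    intro x
    have h1 : (t, x) ∈ (Set.Icc (t₀ - 1) (t₀ + 1)) ×ˢ (Set.univ : Set M) := by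
      have : |t - t₀| < 1 := lt_of_lt_of_le (lt_of_lt_of_le ht (min_le_right _ _)) le_rfl
      simp only [Set.mem_prod, Set.mem_Icc, Set.mem_univ, and_true]
      rw [abs_lt] at this
      constructor <;> linarith
    have h2 : (t₀, x) ∈ (Set.Icc (t₀ - 1) (t₀ + 1)) ×ˢ (Set.univ : Set M) := by
      simp only [Set.mem_prod, Set.mem_Icc, Set.mem_univ, and_true]
      constructor <;> linarith
    have hdd : dist ((t, x) : ℝ × M) (t₀, x) < δ := by
      simp only [Prod.dist_eq, dist_self]
      have : dist t t₀ < δ := lt_of_lt_of_le ht (min_le_left _ _)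
      simpa [max_lt_iff, hδ] using this
    have := hd _ h1 _ h2 hdd
    rw [Real.dist_eq] at this
    exact le_of_lt this
  have hct : Continuous (F t) := hF.comp (Continuous.prodMk_right t)
  have hct₀ : Continuous (F t₀) := hF.comp (Continuous.prodMk_right t₀)
  rw [Real.dist_eq]
  exact lt_of_le_of_lt (abs_ciInf_sub_ciInf_le hct hct₀ habs) (by linarith)

lemma continuous_osc {F : ℝ → M → ℝ}
    (hF : Continuous fun q : ℝ × M => F q.1 q.2) :
    Continuous fun t => osc (F t) :=
  (continuous_param_sup hF).sub (continuous_param_inf hF)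

lemma hnorm_nonneg {F : ℝ → M → ℝ}
    (hF : ∀ t, Continuous (F t)) : 0 ≤ hnorm F := by
  rw [hnorm_eq]
  exact intervalIntegral.integral_nonneg (by norm_num) (fun t _ => osc_nonneg (hF t))

lemma osc_zero : osc (fun _ : M => (0:ℝ)) = 0 := by
  simp [osc, ciSup_const, ciInf_const]

lemma hnorm_zero : hnorm (fun _ (_ : M) => (0:ℝ)) = 0 := by
  rw [hnorm_eq]
  simp [osc_zero]

lemma dham_parts {p q : (ℝ → Homeomorph M M) × (ℝ → M → ℝ)}
    (hp : Continuous fun z : ℝ × M => p.2 z.1 z.2)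
    (hq : Continuous fun z : ℝ × M => q.2 z.1 z.2)
    {c : ℝ} (hc : dham p q < c) :
    hnorm (fun t x => p.2 t x - q.2 t x) < c ∧ pdist p.1 q.1 < c := by
  have h1 : 0 ≤ hnorm (fun t x => p.2 t x - q.2 t x) :=
    hnorm_nonneg fun t => (hp.comp (Continuous.prodMk_right t)).sub (hq.comp (Continuous.prodMk_right t))
  have h2 : 0 ≤ pdist p.1 q.1 := pdist_nonneg _ _
  unfold dham at hc
  constructor <;> linarith

lemma hnorm_decomp {A B C K : ℝ → M → ℝ} {c : ℝ}
    (hA : Continuous fun q : ℝ × M => A q.1 q.2)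
    (hB : Continuous fun q : ℝ × M => B q.1 q.2)
    (hC : Continuous fun q : ℝ × M => C q.1 q.2)
    (hK : Continuous fun q : ℝ × M => K q.1 q.2)
    (hpt : ∀ t ∈ Set.Icc (0:ℝ) 1, osc (K t) ≤ osc (A t) + osc (B t) + osc (C t) + c) :
    hnorm K ≤ hnorm A + hnorm B + hnorm C + c := by
  have iA : IntervalIntegrable (fun t => osc (A t)) volume 0 1 :=
    (continuous_osc hA).intervalIntegrable 0 1
  have iB : IntervalIntegrable (fun t => osc (B t)) volume 0 1 :=
    (continuous_osc hB).intervalIntegrable 0 1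
  have iC : IntervalIntegrable (fun t => osc (C t)) volume 0 1 :=
    (continuous_osc hC).intervalIntegrable 0 1
  have iK : IntervalIntegrable (fun t => osc (K t)) volume 0 1 :=
    (continuous_osc hK).intervalIntegrable 0 1
  have iconst : IntervalIntegrable (fun _ : ℝ => c) volume 0 1 := intervalIntegrable_const
  rw [hnorm_eq, hnorm_eq, hnorm_eq, hnorm_eq]
  have h1 : (∫ t in (0:ℝ)..1, osc (K t)) ≤
      ∫ t in (0:ℝ)..1, (osc (A t) + osc (B t) + osc (C t) + c) :=
    intervalIntegral.integral_mono_on (by norm_num) iK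
      (((iA.add iB).add iC).add iconst) hpt
  rw [intervalIntegral.integral_add ((iA.add iB).add iC) iconst,
    intervalIntegral.integral_add (iA.add iB) iC,
    intervalIntegral.integral_add iA iB] at h1
  have h2 : (∫ _ in (0:ℝ)..1, c) = c := by simp
  rw [h2] at h1
  linarith

end Helpers
/-- The group of Hamiltonian homeomorphisms forms a subgroup of `Homeo(M)`.
Here `Q` stands for the set of pairs (smooth Hamiltonian path starting at `id`, its
generating normalized Hamiltonian), abstractly given with joint continuity and closure
under the group operations, and `h ∈ Hameo(M,ω)` iff `h = C⁰-lim φ_{H_i}¹` for a sequence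
`(φ_{H_i}, H_i)` in `Q` which is Cauchy in the Hamiltonian metric `dham` (Hofer-Cauchy
Hamiltonians and `C⁰`-Cauchy paths). The claim is that `Hameo(M,ω)` contains the identity
and is closed under composition and inverse. -/
theorem stmt14 (M : Type*) [MetricSpace M] [CompactSpace M] [Nonempty M]
    (Q : Set ((ℝ → Homeomorph M M) × (ℝ → M → ℝ)))
    (hQcont : ∀ p ∈ Q, Continuous (fun q : ℝ × M => p.1 q.1 q.2) ∧
      Continuous (fun q : ℝ × M => (p.1 q.1).symm q.2) ∧
      Continuous (fun q : ℝ × M => p.2 q.1 q.2) ∧ p.1 0 = Homeomorph.refl M)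
    (hQid : ((fun _ => Homeomorph.refl M, fun _ _ => (0:ℝ)) :
      (ℝ → Homeomorph M M) × (ℝ → M → ℝ)) ∈ Q)
    (hQmul : ∀ p ∈ Q, ∀ q ∈ Q, pcomp p q ∈ Q)
    (hQinv : ∀ p ∈ Q, pinv p ∈ Q) :
    let Hameo : Set (Homeomorph M M) :=
      {h | ∃ u : ℕ → (ℝ → Homeomorph M M) × (ℝ → M → ℝ),
        (∀ i, u i ∈ Q) ∧
        (∀ ε > 0, ∃ N, ∀ i ≥ N, ∀ j ≥ N, dham (u i) (u j) < ε) ∧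
        Tendsto (fun i => hdist ((u i).1 1) h) atTop (𝓝 0)}
    (Homeomorph.refl M ∈ Hameo) ∧
    (∀ g ∈ Hameo, ∀ h ∈ Hameo, g.trans h ∈ Hameo) ∧
    (∀ h ∈ Hameo, h.symm ∈ Hameo) := by
  intro Hameo
  have hone : (1:ℝ) ∈ Set.Icc (0:ℝ) 1 := ⟨by norm_num, le_refl 1⟩
  refine ⟨?_, ?_, ?_⟩
  · -- identity
    refine ⟨fun _ => (fun _ => Homeomorph.refl M, fun _ _ => (0:ℝ)), fun _ => hQid, ?_, ?_⟩
    · intro ε hε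
      refine ⟨0, fun i _ j _ => ?_⟩
      have hh : hdist (Homeomorph.refl M) (Homeomorph.refl M) = 0 := by
        simp [hdist, cdist, ciSup_const]
      have hd : dham ((fun _ => Homeomorph.refl M, fun _ _ => (0:ℝ)) :
          (ℝ → Homeomorph M M) × (ℝ → M → ℝ))
          ((fun _ => Homeomorph.refl M, fun _ _ => (0:ℝ))) = 0 := by
        unfold dham
        have h1 : hnorm (fun t (x : M) => (0:ℝ) - 0) = 0 := by
          simpa using hnorm_zero (M := M)
        have h2 : pdist (M := M) (fun _ => Homeomorph.refl M) (fun _ => Homeomorph.refl M)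
            = 0 := by
          simp [pdist, hh, ciSup_const]
        simpa [h2] using h1
      rw [hd]; exact hε
    · have hh : hdist (Homeomorph.refl M) (Homeomorph.refl M) = 0 := by
        simp [hdist, cdist, ciSup_const]
      simpa [hh] using (tendsto_const_nhds :
        Tendsto (fun _ : ℕ => (0:ℝ)) atTop (𝓝 0))
  · -- composition
    rintro g ⟨u, huQ, huC, huT⟩ h ⟨v, hvQ, hvC, hvT⟩
    have hu1 : ∀ i, Continuous fun q : ℝ × M => (u i).1 q.1 q.2 :=
      fun i => (hQcont _ (huQ i)).1
    have hu2 : ∀ i, Continuous fun q : ℝ × M => ((u i).1 q.1).symm q.2 :=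
      fun i => (hQcont _ (huQ i)).2.1
    have hu3 : ∀ i, Continuous fun q : ℝ × M => (u i).2 q.1 q.2 :=
      fun i => (hQcont _ (huQ i)).2.2.1
    have hv1 : ∀ i, Continuous fun q : ℝ × M => (v i).1 q.1 q.2 :=
      fun i => (hQcont _ (hvQ i)).1
    have hv2 : ∀ i, Continuous fun q : ℝ × M => ((v i).1 q.1).symm q.2 :=
      fun i => (hQcont _ (hvQ i)).2.1
    have hv3 : ∀ i, Continuous fun q : ℝ × M => (v i).2 q.1 q.2 :=
      fun i => (hQcont _ (hvQ i)).2.2.1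
    refine ⟨fun i => pcomp (v i) (u i), fun i => hQmul _ (hvQ i) _ (huQ i), ?_, ?_⟩
    · -- Cauchy
      intro ε hε
      have hε₁ : 0 < ε / 9 := by linarith
      obtain ⟨Nu, hNu⟩ := huC (ε / 9) hε₁
      obtain ⟨Nv, hNv⟩ := hvC (ε / 9) hε₁
      set j₀ := max Nu Nv with hj₀
      obtain ⟨δ₁, hδ₁, hmψ⟩ := unif_aux (M := M) (N := M)
        (f := fun t x => (v j₀).1 t x) (hv1 j₀) hε₁
      obtain ⟨δ₂, hδ₂, hmφ⟩ := unif_aux (M := M) (N := M)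
        (f := fun t x => ((u j₀).1 t).symm x) (hu2 j₀) hε₁
      obtain ⟨δ₃, hδ₃, hmU⟩ := unif_aux (M := M) (N := ℝ)
        (f := fun t x => (u j₀).2 t x) (hu3 j₀) hε₁
      set δ := min δ₁ (min δ₂ δ₃) with hδdef
      have hδ : 0 < δ := lt_min hδ₁ (lt_min hδ₂ hδ₃)
      obtain ⟨N₂u, hN₂u⟩ := huC (min (ε / 9) δ) (lt_min hε₁ hδ)
      obtain ⟨N₂v, hN₂v⟩ := hvC (min (ε / 9) δ) (lt_min hε₁ hδ)
      refine ⟨max j₀ (max N₂u N₂v), fun i hi j hj => ?_⟩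
      have hij0 : j₀ ≤ i := le_trans (le_max_left _ _) hi
      have hjj0 : j₀ ≤ j := le_trans (le_max_left _ _) hj
      have hiNu : Nu ≤ i := le_trans (le_max_left _ _) hij0
      have hjNu : Nu ≤ j := le_trans (le_max_left _ _) hjj0
      have hiNv : Nv ≤ i := le_trans (le_max_right _ _) hij0
      have hjNv : Nv ≤ j := le_trans (le_max_right _ _) hjj0
      have hiN2u : N₂u ≤ i := le_trans (le_trans (le_max_left _ _) (le_max_right _ _)) hi
      have hjN2u : N₂u ≤ j := le_trans (le_trans (le_max_left _ _) (le_max_right _ _)) hj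
      have hiN2v : N₂v ≤ i := le_trans (le_trans (le_max_right _ _) (le_max_right _ _)) hi
      have hjN2v : N₂v ≤ j := le_trans (le_trans (le_max_right _ _) (le_max_right _ _)) hj
      have hi0v := dham_parts (hv3 i) (hv3 j₀) (hNv i hiNv j₀ (le_max_right _ _))
      have h0jv := dham_parts (hv3 j₀) (hv3 j) (hNv j₀ (le_max_right _ _) j hjNv)
      have hi0u := dham_parts (hu3 i) (hu3 j₀) (hNu i hiNu j₀ (le_max_left _ _))
      have h0ju := dham_parts (hu3 j₀) (hu3 j) (hNu j₀ (le_max_left _ _) j hjNu)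
      have hiju := dham_parts (hu3 i) (hu3 j) (hN₂u i hiN2u j hjN2u)
      have hijv := dham_parts (hv3 i) (hv3 j) (hN₂v i hiN2v j hjN2v)
      have hpuδ : pdist (u i).1 (u j).1 < δ := lt_of_lt_of_le hiju.2 (min_le_right _ _)
      have hpvδ : pdist (v i).1 (v j).1 < δ := lt_of_lt_of_le hijv.2 (min_le_right _ _)
      show dham (pcomp (v i) (u i)) (pcomp (v j) (u j)) < ε
      show hnorm (fun t x => ((v i).2 t x + (u i).2 t (((v i).1 t).symm x))
            - ((v j).2 t x + (u j).2 t (((v j).1 t).symm x)))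
          + pdist (fun t => ((u i).1 t).trans ((v i).1 t))
            (fun t => ((u j).1 t).trans ((v j).1 t)) < ε
      -- pdist part
      have hpd : pdist (fun t => ((u i).1 t).trans ((v i).1 t))
          (fun t => ((u j).1 t).trans ((v j).1 t)) ≤ 3 * (ε / 9) := by
        refine pdist_le fun t ht => hdist_le (cdist_le fun x => ?_) (cdist_le fun x => ?_)
        · simp only [Homeomorph.trans_apply]
          have t1 : dist ((v i).1 t ((u i).1 t x)) ((v j₀).1 t ((u i).1 t x)) ≤ ε / 9 :=
            le_trans (dist_le_cdist _ _ _)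
              (le_trans (cdist_le_hdist _ _) (le_trans (hdist_le_pdist _ _ ht) hi0v.2.le))
          have t2 : dist ((v j₀).1 t ((u i).1 t x)) ((v j₀).1 t ((u j).1 t x)) ≤ ε / 9 := by
            refine (hmψ t ht _ _ ?_).le
            exact lt_of_le_of_lt
              (le_trans (dist_le_cdist _ _ _)
                (le_trans (cdist_le_hdist _ _) (hdist_le_pdist _ _ ht)))
              (lt_of_lt_of_le hpuδ (le_trans (min_le_left _ _) le_rfl))
          have t3 : dist ((v j₀).1 t ((u j).1 t x)) ((v j).1 t ((u j).1 t x)) ≤ ε / 9 :=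
            le_trans (dist_le_cdist _ _ _)
              (le_trans (cdist_le_hdist _ _) (le_trans (hdist_le_pdist _ _ ht) h0jv.2.le))
          calc dist ((v i).1 t ((u i).1 t x)) ((v j).1 t ((u j).1 t x))
              ≤ dist ((v i).1 t ((u i).1 t x)) ((v j₀).1 t ((u i).1 t x))
                + dist ((v j₀).1 t ((u i).1 t x)) ((v j₀).1 t ((u j).1 t x))
                + dist ((v j₀).1 t ((u j).1 t x)) ((v j).1 t ((u j).1 t x)) :=
                dist_triangle4 _ _ _ _
            _ ≤ 3 * (ε / 9) := by linarith
        · simp only [Homeomorph.symm_trans_apply]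
          have t1 : dist (((u i).1 t).symm (((v i).1 t).symm x))
              (((u j₀).1 t).symm (((v i).1 t).symm x)) ≤ ε / 9 :=
            le_trans (dist_le_cdist ((u i).1 t).symm ((u j₀).1 t).symm _)
              (le_trans (cdist_symm_le_hdist _ _)
                (le_trans (hdist_le_pdist _ _ ht) hi0u.2.le))
          have t2 : dist (((u j₀).1 t).symm (((v i).1 t).symm x))
              (((u j₀).1 t).symm (((v j).1 t).symm x)) ≤ ε / 9 := by
            refine (hmφ t ht _ _ ?_).le
            exact lt_of_le_of_lt
              (le_trans (dist_le_cdist ((v i).1 t).symm ((v j).1 t).symm _)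
                (le_trans (cdist_symm_le_hdist _ _) (hdist_le_pdist _ _ ht)))
              (lt_of_lt_of_le hpvδ (le_trans (min_le_right _ _) (min_le_left _ _)))
          have t3 : dist (((u j₀).1 t).symm (((v j).1 t).symm x))
              (((u j).1 t).symm (((v j).1 t).symm x)) ≤ ε / 9 :=
            le_trans (dist_le_cdist ((u j₀).1 t).symm ((u j).1 t).symm _)
              (le_trans (cdist_symm_le_hdist _ _)
                (le_trans (hdist_le_pdist _ _ ht) h0ju.2.le))
          calc dist (((u i).1 t).symm (((v i).1 t).symm x))
                (((u j).1 t).symm (((v j).1 t).symm x))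
              ≤ dist (((u i).1 t).symm (((v i).1 t).symm x))
                  (((u j₀).1 t).symm (((v i).1 t).symm x))
                + dist (((u j₀).1 t).symm (((v i).1 t).symm x))
                  (((u j₀).1 t).symm (((v j).1 t).symm x))
                + dist (((u j₀).1 t).symm (((v j).1 t).symm x))
                  (((u j).1 t).symm (((v j).1 t).symm x)) := dist_triangle4 _ _ _ _
            _ ≤ 3 * (ε / 9) := by linarith
      -- hnorm part
      have hK : Continuous fun q : ℝ × M =>
          ((v i).2 q.1 q.2 + (u i).2 q.1 (((v i).1 q.1).symm q.2))
            - ((v j).2 q.1 q.2 + (u j).2 q.1 (((v j).1 q.1).symm q.2)) :=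
        ((hv3 i).add ((hu3 i).comp (continuous_fst.prodMk (hv2 i)))).sub
          ((hv3 j).add ((hu3 j).comp (continuous_fst.prodMk (hv2 j))))
      have hnb : hnorm (fun t x => ((v i).2 t x + (u i).2 t (((v i).1 t).symm x))
            - ((v j).2 t x + (u j).2 t (((v j).1 t).symm x)))
          ≤ hnorm (fun t x => (v i).2 t x - (v j).2 t x)
            + hnorm (fun t x => (u i).2 t x - (u j₀).2 t x)
            + hnorm (fun t x => (u j₀).2 t x - (u j).2 t x) + 2 * (ε / 9) := by
        refine hnorm_decomp ((hv3 i).sub (hv3 j)) ((hu3 i).sub (hu3 j₀))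
          ((hu3 j₀).sub (hu3 j)) hK ?_
        intro t ht
        have key : (fun x : M => ((v i).2 t x + (u i).2 t (((v i).1 t).symm x))
              - ((v j).2 t x + (u j).2 t (((v j).1 t).symm x)))
            = fun x : M => ((v i).2 t x - (v j).2 t x)
              + (((u i).2 t (((v i).1 t).symm x) - (u j₀).2 t (((v i).1 t).symm x))
                + (((u j₀).2 t (((v i).1 t).symm x) - (u j₀).2 t (((v j).1 t).symm x))
                  + ((u j₀).2 t (((v j).1 t).symm x) - (u j).2 t (((v j).1 t).symm x)))) := by
          funext x; ring
        show osc (fun x : M => ((v i).2 t x + (u i).2 t (((v i).1 t).symm x))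
            - ((v j).2 t x + (u j).2 t (((v j).1 t).symm x))) ≤ _
        rw [key]
        have hc1 : Continuous fun x : M => (v i).2 t x - (v j).2 t x :=
          (((hv3 i).comp (Continuous.prodMk_right t))).sub ((hv3 j).comp (Continuous.prodMk_right t))
        have hai : Continuous fun x : M => ((v i).1 t).symm x :=
          (hv2 i).comp (Continuous.prodMk_right t)
        have haj : Continuous fun x : M => ((v j).1 t).symm x :=
          (hv2 j).comp (Continuous.prodMk_right t)
        have hc2 : Continuous fun x : M =>
            (u i).2 t (((v i).1 t).symm x) - (u j₀).2 t (((v i).1 t).symm x) :=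
          (((hu3 i).comp (Continuous.prodMk_right t)).comp hai).sub
            (((hu3 j₀).comp (Continuous.prodMk_right t)).comp hai)
        have hcm : Continuous fun x : M =>
            (u j₀).2 t (((v i).1 t).symm x) - (u j₀).2 t (((v j).1 t).symm x) :=
          (((hu3 j₀).comp (Continuous.prodMk_right t)).comp hai).sub
            (((hu3 j₀).comp (Continuous.prodMk_right t)).comp haj)
        have hc4 : Continuous fun x : M =>
            (u j₀).2 t (((v j).1 t).symm x) - (u j).2 t (((v j).1 t).symm x) :=
          (((hu3 j₀).comp (Continuous.prodMk_right t)).comp haj).sub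
            (((hu3 j).comp (Continuous.prodMk_right t)).comp haj)
        have step1 := osc_add_le hc1 (hc2.add (hcm.add hc4))
        have step2 := osc_add_le hc2 (hcm.add hc4)
        have step3 := osc_add_le hcm hc4
        simp only [Pi.add_def] at step1 step2
        have he2 : osc (fun x : M =>
              (u i).2 t (((v i).1 t).symm x) - (u j₀).2 t (((v i).1 t).symm x))
            = osc (fun y => (u i).2 t y - (u j₀).2 t y) :=
          osc_comp (fun y => (u i).2 t y - (u j₀).2 t y) ((v i).1 t).symm
        have he4 : osc (fun x : M =>
              (u j₀).2 t (((v j).1 t).symm x) - (u j).2 t (((v j).1 t).symm x))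
            = osc (fun y => (u j₀).2 t y - (u j).2 t y) :=
          osc_comp (fun y => (u j₀).2 t y - (u j).2 t y) ((v j).1 t).symm
        have hmid : osc (fun x : M =>
              (u j₀).2 t (((v i).1 t).symm x) - (u j₀).2 t (((v j).1 t).symm x))
            ≤ 2 * (ε / 9) := by
          refine osc_le_of_abs_le fun x => ?_
          have hdd : dist (((v i).1 t).symm x) (((v j).1 t).symm x) < δ₃ :=
            lt_of_le_of_lt
              (le_trans (dist_le_cdist ((v i).1 t).symm ((v j).1 t).symm _)
                (le_trans (cdist_symm_le_hdist _ _) (hdist_le_pdist _ _ ht)))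
              (lt_of_lt_of_le hpvδ (le_trans (min_le_right _ _) (min_le_right _ _)))
          have := hmU t ht _ _ hdd
          rw [Real.dist_eq] at this
          exact this.le
        calc osc (fun x : M => ((v i).2 t x - (v j).2 t x)
              + (((u i).2 t (((v i).1 t).symm x) - (u j₀).2 t (((v i).1 t).symm x))
                + (((u j₀).2 t (((v i).1 t).symm x) - (u j₀).2 t (((v j).1 t).symm x))
                  + ((u j₀).2 t (((v j).1 t).symm x) - (u j).2 t (((v j).1 t).symm x)))))
            ≤ osc (fun x : M => (v i).2 t x - (v j).2 t x)
              + osc (fun y => (u i).2 t y - (u j₀).2 t y)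
              + osc (fun y => (u j₀).2 t y - (u j).2 t y) + 2 * (ε / 9) := by
              rw [he2] at step2
              rw [he4] at step3
              linarith
          _ = osc ((fun t (x : M) => (v i).2 t x - (v j).2 t x) t)
              + osc ((fun t (x : M) => (u i).2 t x - (u j₀).2 t x) t)
              + osc ((fun t (x : M) => (u j₀).2 t x - (u j).2 t x) t) + 2 * (ε / 9) := rfl
      have ha : hnorm (fun t x => (v i).2 t x - (v j).2 t x) < ε / 9 :=
        lt_of_lt_of_le hijv.1 (min_le_left _ _)
      have hb := hi0u.1
      have hc := h0ju.1
      linarith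
    · -- convergence at time 1
      rw [Metric.tendsto_atTop]
      intro ε hε
      have hε4 : 0 < ε / 4 := by linarith
      obtain ⟨δh, hδh, hmh⟩ := unif_aux (M := M) (N := M)
        (f := fun _ x => h x) (h.continuous.comp continuous_snd) hε4
      obtain ⟨δg, hδg, hmg⟩ := unif_aux (M := M) (N := M)
        (f := fun _ x => g.symm x) (g.symm.continuous.comp continuous_snd) hε4
      have hmin : 0 < min (ε / 4) (min δh δg) := lt_min hε4 (lt_min hδh hδg)
      obtain ⟨Mu, hMu⟩ := Metric.tendsto_atTop.mp huT _ hmin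
      obtain ⟨Mv, hMv⟩ := Metric.tendsto_atTop.mp hvT _ hmin
      refine ⟨max Mu Mv, fun i hi => ?_⟩
      have hgu : hdist ((u i).1 1) g < min (ε / 4) (min δh δg) := by
        have := hMu i (le_trans (le_max_left _ _) hi)
        rwa [Real.dist_0_eq_abs, abs_of_nonneg (hdist_nonneg _ _)] at this
      have hhv : hdist ((v i).1 1) h < min (ε / 4) (min δh δg) := by
        have := hMv i (le_trans (le_max_right _ _) hi)
        rwa [Real.dist_0_eq_abs, abs_of_nonneg (hdist_nonneg _ _)] at this
      rw [Real.dist_0_eq_abs, abs_of_nonneg (hdist_nonneg _ _)]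
      show hdist (((u i).1 1).trans ((v i).1 1)) (g.trans h) < ε
      have hbd : hdist (((u i).1 1).trans ((v i).1 1)) (g.trans h) ≤ ε / 2 := by
        refine hdist_le (cdist_le fun x => ?_) (cdist_le fun x => ?_)
        · simp only [Homeomorph.trans_apply]
          have t1 : dist ((v i).1 1 ((u i).1 1 x)) (h ((u i).1 1 x)) ≤ ε / 4 :=
            le_trans (dist_le_cdist _ _ _)
              (le_trans (cdist_le_hdist _ _)
                (le_trans hhv.le (min_le_left _ _)))
          have t2 : dist (h ((u i).1 1 x)) (h (g x)) ≤ ε / 4 := by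
            refine (hmh 1 hone _ _ ?_).le
            exact lt_of_le_of_lt
              (le_trans (dist_le_cdist _ _ _) (cdist_le_hdist _ _))
              (lt_of_lt_of_le hgu (le_trans (min_le_right _ _) (min_le_left _ _)))
          calc dist ((v i).1 1 ((u i).1 1 x)) (h (g x))
              ≤ dist ((v i).1 1 ((u i).1 1 x)) (h ((u i).1 1 x))
                + dist (h ((u i).1 1 x)) (h (g x)) := dist_triangle _ _ _
            _ ≤ ε / 2 := by linarith
        · simp only [Homeomorph.symm_trans_apply]
          have t1 : dist (((u i).1 1).symm (((v i).1 1).symm x))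
              (g.symm (((v i).1 1).symm x)) ≤ ε / 4 :=
            le_trans (dist_le_cdist ((u i).1 1).symm g.symm _)
              (le_trans (cdist_symm_le_hdist _ _)
                (le_trans hgu.le (min_le_left _ _)))
          have t2 : dist (g.symm (((v i).1 1).symm x)) (g.symm (h.symm x)) ≤ ε / 4 := by
            refine (hmg 1 hone _ _ ?_).le
            exact lt_of_le_of_lt
              (le_trans (dist_le_cdist ((v i).1 1).symm h.symm _)
                (cdist_symm_le_hdist _ _))
              (lt_of_lt_of_le hhv (le_trans (min_le_right _ _) (min_le_right _ _)))
          calc dist (((u i).1 1).symm (((v i).1 1).symm x)) (g.symm (h.symm x))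
              ≤ dist (((u i).1 1).symm (((v i).1 1).symm x))
                  (g.symm (((v i).1 1).symm x))
                + dist (g.symm (((v i).1 1).symm x)) (g.symm (h.symm x)) :=
                dist_triangle _ _ _
            _ ≤ ε / 2 := by linarith
      linarith
  · -- inverse
    rintro h ⟨u, huQ, huC, huT⟩
    have hu1 : ∀ i, Continuous fun q : ℝ × M => (u i).1 q.1 q.2 :=
      fun i => (hQcont _ (huQ i)).1
    have hu3 : ∀ i, Continuous fun q : ℝ × M => (u i).2 q.1 q.2 :=
      fun i => (hQcont _ (huQ i)).2.2.1
    refine ⟨fun i => pinv (u i), fun i => hQinv _ (huQ i), ?_, ?_⟩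
    · intro ε hε
      have hε₁ : 0 < ε / 6 := by linarith
      obtain ⟨N₁, hN₁⟩ := huC (ε / 6) hε₁
      set j₀ := N₁ with hj₀
      obtain ⟨δ₃, hδ₃, hmU⟩ := unif_aux (M := M) (N := ℝ) (hu3 j₀) hε₁
      obtain ⟨N₂, hN₂⟩ := huC (min (ε / 6) δ₃) (lt_min hε₁ hδ₃)
      refine ⟨max N₁ N₂, fun i hi j hj => ?_⟩
      have hiN₁ : N₁ ≤ i := le_trans (le_max_left _ _) hi
      have hjN₁ : N₁ ≤ j := le_trans (le_max_left _ _) hj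
      -- pieces
      have h0i := dham_parts (hu3 j₀) (hu3 i) (hN₁ j₀ le_rfl i hiN₁)
      have hj0 := dham_parts (hu3 j) (hu3 j₀) (hN₁ j hjN₁ j₀ le_rfl)
      have hji := dham_parts (hu3 j) (hu3 i)
        (hN₂ j (le_trans (le_max_right _ _) hj) i (le_trans (le_max_right _ _) hi))
      have hij := dham_parts (hu3 i) (hu3 j)
        (hN₂ i (le_trans (le_max_right _ _) hi) j (le_trans (le_max_right _ _) hj))
      -- goal
      show dham (pinv (u i)) (pinv (u j)) < ε
      show hnorm (fun t x => -((u i).2 t ((u i).1 t x)) - -((u j).2 t ((u j).1 t x)))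
          + pdist (fun t => ((u i).1 t).symm) (fun t => ((u j).1 t).symm) < ε
      -- pdist part
      have hpd : pdist (fun t => ((u i).1 t).symm) (fun t => ((u j).1 t).symm) ≤ ε / 6 := by
        refine pdist_le fun t ht => ?_
        rw [hdist_symm]
        exact le_trans (hdist_le_pdist _ _ ht) (le_trans hij.2.le (min_le_left _ _))
      -- hnorm part
      have hK : Continuous fun q : ℝ × M =>
          -((u i).2 q.1 ((u i).1 q.1 q.2)) - -((u j).2 q.1 ((u j).1 q.1 q.2)) :=
        (((hu3 i).comp (continuous_fst.prodMk (hu1 i))).neg).sub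
          (((hu3 j).comp (continuous_fst.prodMk (hu1 j))).neg)
      have hnb : hnorm (fun t x => -((u i).2 t ((u i).1 t x)) - -((u j).2 t ((u j).1 t x)))
          ≤ hnorm (fun t x => (u j₀).2 t x - (u i).2 t x)
            + hnorm (fun t x => (u j).2 t x - (u j₀).2 t x)
            + hnorm (fun _ (_ : M) => (0:ℝ)) + 2 * (ε / 6) := by
        refine hnorm_decomp ((hu3 j₀).sub (hu3 i)) ((hu3 j).sub (hu3 j₀)) continuous_const
          hK ?_
        intro t ht
        have key : (fun x : M => -((u i).2 t ((u i).1 t x)) - -((u j).2 t ((u j).1 t x)))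
            = fun x : M => ((u j₀).2 t ((u i).1 t x) - (u i).2 t ((u i).1 t x))
              + (((u j).2 t ((u j).1 t x) - (u j₀).2 t ((u j).1 t x))
                + ((u j₀).2 t ((u j).1 t x) - (u j₀).2 t ((u i).1 t x))) := by
          funext x; ring
        show osc (fun x : M => -((u i).2 t ((u i).1 t x)) - -((u j).2 t ((u j).1 t x))) ≤ _
        rw [key]
        have hca : Continuous fun x : M =>
            (u j₀).2 t ((u i).1 t x) - (u i).2 t ((u i).1 t x) :=
          (((hu3 j₀).comp (Continuous.prodMk_right t)).comp
            (((hu1 i).comp (Continuous.prodMk_right t)))).sub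
            (((hu3 i).comp (Continuous.prodMk_right t)).comp
              (((hu1 i).comp (Continuous.prodMk_right t))))
        have hcb : Continuous fun x : M =>
            (u j).2 t ((u j).1 t x) - (u j₀).2 t ((u j).1 t x) :=
          (((hu3 j).comp (Continuous.prodMk_right t)).comp
            (((hu1 j).comp (Continuous.prodMk_right t)))).sub
            (((hu3 j₀).comp (Continuous.prodMk_right t)).comp
              (((hu1 j).comp (Continuous.prodMk_right t))))
        have hcm : Continuous fun x : M =>
            (u j₀).2 t ((u j).1 t x) - (u j₀).2 t ((u i).1 t x) :=
          (((hu3 j₀).comp (Continuous.prodMk_right t)).comp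
            (((hu1 j).comp (Continuous.prodMk_right t)))).sub
            (((hu3 j₀).comp (Continuous.prodMk_right t)).comp
              (((hu1 i).comp (Continuous.prodMk_right t))))
        have step1 := osc_add_le hca (hcb.add hcm)
        have step2 := osc_add_le hcb hcm
        simp only [Pi.add_def] at step1
        have hea : osc (fun x : M => (u j₀).2 t ((u i).1 t x) - (u i).2 t ((u i).1 t x))
            = osc (fun y => (u j₀).2 t y - (u i).2 t y) :=
          osc_comp (fun y => (u j₀).2 t y - (u i).2 t y) ((u i).1 t)
        have heb : osc (fun x : M => (u j).2 t ((u j).1 t x) - (u j₀).2 t ((u j).1 t x))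
            = osc (fun y => (u j).2 t y - (u j₀).2 t y) :=
          osc_comp (fun y => (u j).2 t y - (u j₀).2 t y) ((u j).1 t)
        have hmid : osc (fun x : M => (u j₀).2 t ((u j).1 t x) - (u j₀).2 t ((u i).1 t x))
            ≤ 2 * (ε / 6) := by
          refine osc_le_of_abs_le fun x => ?_
          have hdd : dist ((u j).1 t x) ((u i).1 t x) < δ₃ :=
            lt_of_le_of_lt
              (le_trans (dist_le_cdist _ _ _)
                (le_trans (cdist_le_hdist _ _) (hdist_le_pdist _ _ ht)))
              (lt_of_lt_of_le hji.2 (min_le_right _ _))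
          have := hmU t ht _ _ hdd
          rw [Real.dist_eq] at this
          exact this.le
        have hoz : osc (fun _ : M => (0:ℝ)) = 0 := osc_zero
        calc osc (fun x : M => ((u j₀).2 t ((u i).1 t x) - (u i).2 t ((u i).1 t x))
              + (((u j).2 t ((u j).1 t x) - (u j₀).2 t ((u j).1 t x))
                + ((u j₀).2 t ((u j).1 t x) - (u j₀).2 t ((u i).1 t x))))
            ≤ osc (fun x : M => (u j₀).2 t ((u i).1 t x) - (u i).2 t ((u i).1 t x))
              + (osc (fun x : M => (u j).2 t ((u j).1 t x) - (u j₀).2 t ((u j).1 t x))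
                + osc (fun x : M =>
                    (u j₀).2 t ((u j).1 t x) - (u j₀).2 t ((u i).1 t x))) :=
              le_trans step1 (by linarith)
          _ ≤ osc (fun y => (u j₀).2 t y - (u i).2 t y)
              + osc (fun y => (u j).2 t y - (u j₀).2 t y)
              + osc (fun _ : M => (0:ℝ)) + 2 * (ε / 6) := by
              rw [hea, heb, hoz]; linarith
      have e0 : hnorm (fun _ (_ : M) => (0:ℝ)) = 0 := hnorm_zero
      have ha := h0i.1
      have hb := hj0.1
      rw [e0] at hnb
      linarith
    · exact Filter.Tendsto.congr (fun i => (hdist_symm ((u i).1 1) h).symm) huT
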